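/- If f is a function holomorphic on the open unit disk in ℂ, continuous on the closed unit disk, and f takes only real values on the boundary circle, then f is constant. -/

import Mathlib

open Metric Complex

/-- If `f` is holomorphic on the open unit disk, continuous on the closed unit disk,
and real-valued on the boundary circle, then `f` is constant on the closed disk. -/
theorem holomorphic_real_on_boundary_constant (f : ℂ → ℂ)
    (hcont : ContinuousOn f (Metric.closedBall 0 1))
    (hdiff : DifferentiableOn ℂ f (Metric.ball 0 1))
    (hreal : ∀ z : ℂ, ‖z‖ = 1 → (f z).im = 0) :
    ∃ c : ℂ, ∀ z ∈ Metric.closedBall (0 : ℂ) 1, f z = c := by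
  have hcl : closure (ball (0:ℂ) 1) = closedBall (0:ℂ) 1 := closure_ball 0 one_ne_zero
  have hfr : frontier (ball (0:ℂ) 1) = sphere (0:ℂ) 1 := frontier_ball 0 one_ne_zero
  -- Step 1: Im f = 0 on the closed ball, via max modulus for exp(±I*f).
  have key : ∀ (c : ℂ), c.re = 0 → ∀ z ∈ closedBall (0:ℂ) 1, (c * f z).re ≤ 0 := by
    intro c hc z hz
    have hzcl : z ∈ closure (ball (0:ℂ) 1) := hcl ▸ hz
    have hd : DiffContOnCl ℂ (fun w => Complex.exp (c * f w)) (ball (0:ℂ) 1) := by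
      refine ⟨(hdiff.const_mul c).cexp, ?_⟩
      rw [hcl]
      exact ((hcont.const_smul c).cexp)
    have hb : ∀ w ∈ frontier (ball (0:ℂ) 1), ‖Complex.exp (c * f w)‖ ≤ 1 := by
      intro w hw
      rw [hfr, mem_sphere_zero_iff_norm] at hw
      rw [Complex.norm_exp, Real.exp_le_one_iff, Complex.mul_re,
        hreal w hw, hc]
      simp
    have := Complex.norm_le_of_forall_mem_frontier_norm_le isBounded_ball hd hb hzcl
    rwa [Complex.norm_exp, Real.exp_le_one_iff] at this
  have him : ∀ z ∈ closedBall (0:ℂ) 1, (f z).im = 0 := by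
    intro z hz
    have h1 := key I (by simp) z hz
    have h2 := key (-I) (by simp) z hz
    rw [Complex.mul_re] at h1 h2
    simp at h1 h2
    linarith
  -- Step 2: derivative is zero on the open ball.
  have hderiv : ∀ z ∈ ball (0:ℂ) 1, fderivWithin ℂ f (ball (0:ℂ) 1) z = 0 := by
    intro z hz
    have hnhds : ball (0:ℂ) 1 ∈ nhds z := isOpen_ball.mem_nhds hz
    have hda : DifferentiableAt ℂ f z := (hdiff z hz).differentiableAt hnhds
    obtain ⟨d, hd⟩ : ∃ d, HasDerivAt f d z := ⟨deriv f z, hda.hasDerivAt⟩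
    -- along direction c (‖c‖ arbitrary), t ↦ (f (z + t•c)).im has deriv (c*d).im, but is 0 near 0
    have dir : ∀ c : ℂ, (c * d).im = 0 := by
      intro c
      have hline : HasDerivAt (fun t : ℝ => z + t • c) c 0 := by
        simpa using ((hasDerivAt_id (0:ℝ)).smul_const c).const_add z
      have hcomp : HasDerivAt (fun t : ℝ => f (z + t • c)) (c * d) 0 := by
        have hd' : HasDerivAt f d (z + (0:ℝ) • c) := by simpa using hd
        have := hd'.scomp (0 : ℝ) hline
        simpa [smul_eq_mul, mul_comm, Function.comp_def] using this
      have him' : HasDerivAt (fun t : ℝ => (f (z + t • c)).im) ((c * d).im) 0 :=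
        (Complex.imCLM.hasFDerivAt.comp_hasDerivAt 0 hcomp)
      have hzero : ∀ᶠ t : ℝ in nhds 0, (f (z + t • c)).im = 0 := by
        have : ∀ᶠ t : ℝ in nhds 0, z + t • c ∈ ball (0:ℂ) 1 := by
          have hc : Continuous fun t : ℝ => z + t • c := by continuity
          have : (fun t : ℝ => z + t • c) ⁻¹' ball 0 1 ∈ nhds (0:ℝ) := by
            apply hc.continuousAt.preimage_mem_nhds
            simpa using hnhds
          exact this
        filter_upwards [this] with t ht
        exact him _ (ball_subset_closedBall ht)
      have : HasDerivAt (fun _ : ℝ => (0:ℝ)) ((c * d).im) 0 := by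
        apply him'.congr_of_eventuallyEq
        filter_upwards [hzero] with t ht using ht.symm
      have h0 : (c * d).im = 0 := by
        have := this.deriv
        simpa using this.symm
      exact h0
    have h1 := dir 1
    have h2 := dir I
    simp [Complex.mul_im] at h1 h2
    have hd0 : d = 0 := by
      apply Complex.ext <;> simp_all
    have : fderivWithin ℂ f (ball (0:ℂ) 1) z = fderiv ℂ f z :=
      fderivWithin_of_mem_nhds hnhds
    rw [this]
    have : deriv f z = 0 := by rw [hd.deriv, hd0]
    ext
    simp [← toSpanSingleton_deriv, this]
  -- Step 3: f constant on ball, extend to closed ball by continuity.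
  refine ⟨f 0, ?_⟩
  have hball : ∀ z ∈ ball (0:ℂ) 1, f z = f 0 :=
    fun z hz => (convex_ball 0 1).is_const_of_fderivWithin_eq_zero hdiff hderiv hz
      (mem_ball_self one_pos)
  intro z hz
  have hne : (nhdsWithin z (ball (0:ℂ) 1)).NeBot :=
    mem_closure_iff_nhdsWithin_neBot.mp (hcl ▸ hz)
  have ht : Filter.Tendsto f (nhdsWithin z (ball (0:ℂ) 1)) (nhds (f z)) :=
    ((hcont z hz).mono ball_subset_closedBall).tendsto
  have ht2 : Filter.Tendsto f (nhdsWithin z (ball (0:ℂ) 1)) (nhds (f 0)) := by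
    refine Filter.Tendsto.congr' ?_ tendsto_const_nhds
    filter_upwards [self_mem_nhdsWithin] with w hw using (hball w hw).symm
  exact tendsto_nhds_unique ht ht2
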